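/- Let 0 < ε < 1/3 and let G be an ε-connected finite simple graph on n vertices. Let B be a corruption instance with |V \ B| ≥ (1 − ε)n and let r be a report consistent with B. Let T' be the union of all connected components of the agreement graph H = H(r) that have at least εn vertices. Then |(V \ B) \ T'| < εn; that is, all but fewer than εn of the truthful vertices lie in connected components of H of size at least εn, and hence one can identify a subset of the truthful vertices of size greater than |V \ B| − εn ≥ (1 − 2ε)n. -/

import Mathlib

open scoped Classical

/-- A report `r` is consistent with corruption instance `B` if every truthful vertex
(`u ∉ B`) reports the true type of each of its neighbors. -/
def Consistent {V : Type*} (G : SimpleGraph V) (r : V × V → Bool) (B : Finset V) : Prop :=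
  ∀ u ∉ B, ∀ v, G.Adj u v → (r (u, v) = true ↔ v ∉ B)

/-- The agreement graph `H(r)`: `u, v` adjacent iff adjacent in `G` and both report
each other truthful. -/
def agreementGraph {V : Type*} (G : SimpleGraph V) (r : V × V → Bool) : SimpleGraph V where
  Adj u v := G.Adj u v ∧ r (u, v) = true ∧ r (v, u) = true
  symm := by
    constructor
    rintro u v ⟨h1, h2, h3⟩
    exact ⟨h1.symm, h3, h2⟩
  loopless := by
    constructor
    rintro u ⟨h1, -, -⟩
    exact G.loopless.irrefl u h1

/-- `G` is a δ-good expander: (i) every set `U` with `|U| ≤ 2δn` has more than `|U|`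
neighbors outside `U`; (ii) any two disjoint sets of sizes `≥ δn` and `≥ n/4` are
joined by an edge. -/
def GoodExpander {V : Type*} [Fintype V] (G : SimpleGraph V) (δ : ℝ) : Prop :=
  (∀ U : Finset V, (U.card : ℝ) ≤ 2 * δ * (Fintype.card V : ℝ) →
      U.card < (Finset.univ.filter (fun v => v ∉ U ∧ ∃ u ∈ U, G.Adj u v)).card) ∧
  (∀ A₁ A₂ : Finset V, Disjoint A₁ A₂ →
      δ * (Fintype.card V : ℝ) ≤ (A₁.card : ℝ) →
      (Fintype.card V : ℝ) / 4 ≤ (A₂.card : ℝ) →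
      ∃ a ∈ A₁, ∃ b ∈ A₂, G.Adj a b)

/-- The subgraph of `G` induced on a set `T` (kept as a graph on the same vertex set). -/
def inducedOn {V : Type*} (G : SimpleGraph V) (T : Set V) : SimpleGraph V where
  Adj u v := G.Adj u v ∧ u ∈ T ∧ v ∈ T
  symm := by
    constructor
    rintro u v ⟨h1, h2, h3⟩
    exact ⟨h1.symm, h3, h2⟩
  loopless := by
    constructor
    rintro u ⟨h1, -, -⟩
    exact G.loopless.irrefl u h1

/-- `G` is δ-connected: any two disjoint sets of sizes `≥ δn` and `≥ (1-3δ)n` are joined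
by an edge of `G`. -/
def DeltaConnected {V : Type*} [Fintype V] (G : SimpleGraph V) (δ : ℝ) : Prop :=
  ∀ A₁ A₂ : Finset V, Disjoint A₁ A₂ →
    δ * (Fintype.card V : ℝ) ≤ (A₁.card : ℝ) →
    (1 - 3 * δ) * (Fintype.card V : ℝ) ≤ (A₂.card : ℝ) →
    ∃ a ∈ A₁, ∃ b ∈ A₂, G.Adj a b

section Aux

variable {V : Type*} [Fintype V]

lemma walk_truthful {G : SimpleGraph V} {r : V × V → Bool} {B : Finset V}
    (hcons : Consistent G r B) :
    ∀ {v w : V}, (agreementGraph G r).Walk v w → v ∉ B → w ∉ B := by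
  intro v w p
  induction p with
  | nil => exact id
  | cons h _ ih => intro hv; exact ih ((hcons _ hv _ h.1).mp h.2.1)

lemma reach_truthful {G : SimpleGraph V} {r : V × V → Bool} {B : Finset V}
    (hcons : Consistent G r B) {v w : V}
    (h : (agreementGraph G r).Reachable v w) (hv : v ∉ B) : w ∉ B := by
  obtain ⟨p⟩ := h
  exact walk_truthful hcons p hv

lemma adj_agreement {G : SimpleGraph V} {r : V × V → Bool} {B : Finset V}
    (hcons : Consistent G r B) {u v : V} (hu : u ∉ B) (hv : v ∉ B)
    (h : G.Adj u v) : (agreementGraph G r).Adj u v :=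
  ⟨h, (hcons u hu v h).mpr hv, (hcons v hv u h.symm).mpr hu⟩

lemma ncard_eq_filter (H : SimpleGraph V) (v : V) :
    {w | H.Reachable v w}.ncard =
      (Finset.univ.filter (fun w => H.Reachable v w)).card := by
  rw [Set.ncard_eq_toFinset_card']
  congr 1
  ext w
  simp

end Aux

/-- If `G` is ε-connected and at least `(1-ε)n` vertices are truthful,
then fewer than `εn` truthful vertices lie outside `T'`, the union of connected
components of the agreement graph of size at least `εn`. -/
theorem epsilon_connected_detection {V : Type*} [Fintype V]
    (G : SimpleGraph V) (ε : ℝ) (hε0 : 0 < ε) (hε1 : ε < 1 / 3)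
    (hG : DeltaConnected G ε) (B : Finset V) (r : V × V → Bool)
    (hcons : Consistent G r B)
    (hB : (1 - ε) * (Fintype.card V : ℝ) ≤ (Bᶜ.card : ℝ)) :
    (({v : V | v ∉ B ∧
        ¬ (ε * (Fintype.card V : ℝ) ≤
          (({w | (agreementGraph G r).Reachable v w}.ncard : ℕ) : ℝ))}.ncard : ℕ) : ℝ) <
      ε * (Fintype.card V : ℝ) := by
  classical
  set H := agreementGraph G r with hH
  set n : ℝ := (Fintype.card V : ℝ) with hn
  by_contra hcon
  push_neg at hcon
  -- Finset version of the bad set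
  set Sf : Finset V := Finset.univ.filter
    (fun v => v ∉ B ∧ (({w | H.Reachable v w}.ncard : ℕ) : ℝ) < ε * n) with hSf
  have hScard : ({v : V | v ∉ B ∧
      (({w | H.Reachable v w}.ncard : ℕ) : ℝ) < ε * n}.ncard : ℕ) = Sf.card := by
    rw [Set.ncard_eq_toFinset_card']
    congr 1
    ext w
    simp [hSf]
  rw [hScard] at hcon
  -- Sf is closed under reachability in H
  have hScl : ∀ v ∈ Sf, ∀ w, H.Reachable v w → w ∈ Sf := by
    intro v hv w hvw
    rw [hSf, Finset.mem_filter] at hv ⊢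
    obtain ⟨-, hvB, hvs⟩ := hv
    refine ⟨Finset.mem_univ _, reach_truthful hcons hvw hvB, ?_⟩
    have : {x | H.Reachable w x} = {x | H.Reachable v x} := by
      ext x
      exact ⟨fun h => hvw.trans h, fun h => hvw.symm.trans h⟩
    rw [this]
    exact hvs
  -- components of vertices of Sf are small
  have hsmall : ∀ v ∈ Sf,
      ((Finset.univ.filter (fun w => H.Reachable v w)).card : ℝ) < ε * n := by
    intro v hv
    rw [hSf, Finset.mem_filter] at hv
    have := hv.2.2
    rw [ncard_eq_filter] at this
    exact this
  -- greedy extraction of a medium-size union of components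
  have key : ∀ m : ℕ, ∀ X : Finset V, X.card = m → X ⊆ Sf →
      (∀ v ∈ X, ∀ w, H.Reachable v w → w ∈ X) → ε * n ≤ (X.card : ℝ) →
      ∃ Y : Finset V, Y ⊆ Sf ∧ (∀ v ∈ Y, ∀ w, H.Reachable v w → w ∈ Y) ∧
        ε * n ≤ (Y.card : ℝ) ∧ (Y.card : ℝ) ≤ 2 * ε * n := by
    intro m
    induction m using Nat.strong_induction_on with
    | _ m ih =>
      intro X hXm hXS hXcl hXlo
      by_cases hX2 : (X.card : ℝ) ≤ 2 * ε * n
      · exact ⟨X, hXS, hXcl, hXlo, hX2⟩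
      · push_neg at hX2
        have hn0 : 0 ≤ n := by positivity
        have hXpos : 0 < X.card := by
          have h0 : (0:ℝ) < (X.card : ℝ) := lt_of_le_of_lt (by positivity) hX2
          exact_mod_cast h0
        obtain ⟨v, hv⟩ := Finset.card_pos.mp hXpos
        set C : Finset V := Finset.univ.filter (fun w => H.Reachable v w) with hC
        have hCX : C ⊆ X := by
          intro w hw
          rw [hC, Finset.mem_filter] at hw
          exact hXcl v hv w hw.2
        have hCsmall : (C.card : ℝ) < ε * n := hsmall v (hXS hv)
        have hvC : v ∈ C := by
          rw [hC, Finset.mem_filter]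
          exact ⟨Finset.mem_univ _, SimpleGraph.Reachable.refl v⟩
        set X' : Finset V := X \ C with hX'
        have hX'card : X'.card = X.card - C.card := Finset.card_sdiff_of_subset hCX
        have hX'cardR : (X'.card : ℝ) = (X.card : ℝ) - (C.card : ℝ) := by
          rw [hX'card, Nat.cast_sub (Finset.card_le_card hCX)]
        have hX'lt : X'.card < m := by
          rw [← hXm, hX'card]
          have : 0 < C.card := Finset.card_pos.mpr ⟨v, hvC⟩
          omega
        have hX'cl : ∀ u ∈ X', ∀ w, H.Reachable u w → w ∈ X' := by
          intro u hu w huw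
          rw [hX', Finset.mem_sdiff] at hu ⊢
          refine ⟨hXcl u hu.1 w huw, ?_⟩
          intro hwC
          apply hu.2
          rw [hC, Finset.mem_filter] at hwC ⊢
          exact ⟨Finset.mem_univ _, (hwC.2.trans huw.symm)⟩
        refine ih X'.card hX'lt X' rfl (fun x hx => hXS ((Finset.sdiff_subset) hx))
          hX'cl ?_
        rw [hX'cardR]
        linarith
  obtain ⟨Y, hYS, hYcl, hYlo, hYhi⟩ := key Sf.card Sf rfl (subset_refl _) hScl hcon
  have hYB : Y ⊆ Bᶜ := by
    intro y hy
    have h := hYS hy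
    rw [hSf, Finset.mem_filter] at h
    exact Finset.mem_compl.mpr h.2.1
  have hA2card : ((Bᶜ \ Y).card : ℝ) = (Bᶜ.card : ℝ) - (Y.card : ℝ) := by
    rw [Finset.card_sdiff_of_subset hYB, Nat.cast_sub (Finset.card_le_card hYB)]
  obtain ⟨a, ha, b, hb, hab⟩ := hG Y (Bᶜ \ Y) Finset.disjoint_sdiff hYlo (by
    rw [hA2card]; linarith)
  have haB : a ∉ B := Finset.mem_compl.mp (hYB ha)
  rw [Finset.mem_sdiff, Finset.mem_compl] at hb
  exact hb.2 (hYcl a ha b (adj_agreement hcons haB hb.1 hab).reachable)
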